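/- Under the hypotheses of the previous pseudodifferential-zone flow estimate (gradient bounds |∇ₓθ| ≤ C·(λ/√Λ)·⟨x⟩^{−1/2+ε}⟨ξ⟩^{1/2+ε}, |∇_ξθ| ≤ C·(λ/√Λ)·⟨x⟩^{1/2+ε}⟨ξ⟩^{−1/2+ε} with ε ∈ (0,1/2)), and assuming additionally √Λ(T) ≤ 1, there exists C'' > 0 depending only on C and ε such that any solution q, p : [s,t₀] → ℝ^d of the Hamiltonian system q' = ∇_ξθ(τ,q,p), p' = −∇ₓθ(τ,q,p) with q(s) = y, p(s) = η satisfies, for all t ∈ [s,t₀]: |p(t) − η| ≤ C''·⟨y⟩^{−1/2+ε}·⟨η⟩^{1/2+ε}·(√Λ(t) − √Λ(s)) and |q(t) − y| ≤ C''·⟨y⟩^{1/2+ε}·⟨η⟩^{−1/2+ε}·(√Λ(t) − √Λ(s)). -/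

import Mathlib

open Set

/-- `Λ(t) = ∫₀ᵗ λ(s) ds`. -/
noncomputable def Lam (lam : ℝ → ℝ) (t : ℝ) : ℝ := ∫ s in (0:ℝ)..t, lam s

/-- The weight `⟨y⟩ = (e + |y|²)^{1/2}`. -/
noncomputable def jw {d : ℕ} (y : EuclideanSpace ℝ (Fin d)) : ℝ :=
  Real.sqrt (Real.exp 1 + ‖y‖ ^ 2)

lemma one_le_jw {d : ℕ} (y : EuclideanSpace ℝ (Fin d)) : 1 ≤ jw y := by
  have h2 : (2:ℝ) ≤ Real.exp 1 := by have := Real.add_one_le_exp (1:ℝ); linarith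
  have h1 : (1:ℝ) ≤ Real.exp 1 + ‖y‖ ^ 2 := by nlinarith [sq_nonneg ‖y‖]
  calc (1:ℝ) = Real.sqrt 1 := Real.sqrt_one.symm
    _ ≤ jw y := Real.sqrt_le_sqrt h1

lemma jw_pos {d : ℕ} (y : EuclideanSpace ℝ (Fin d)) : 0 < jw y :=
  lt_of_lt_of_le one_pos (one_le_jw y)

lemma jw_le_add {d : ℕ} (x y : EuclideanSpace ℝ (Fin d)) : jw x ≤ jw y + ‖x - y‖ := by
  have hu : (0:ℝ) ≤ ‖y‖ := norm_nonneg _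
  have hv : (0:ℝ) ≤ ‖x - y‖ := norm_nonneg _
  have hx : ‖x‖ ≤ ‖y‖ + ‖x - y‖ := by have := norm_sub_norm_le x y; linarith
  have hjy : 0 ≤ jw y := (jw_pos y).le
  have hjy2 : jw y ^ 2 = Real.exp 1 + ‖y‖ ^ 2 := Real.sq_sqrt (by positivity)
  have hyj : ‖y‖ ≤ jw y := by nlinarith [Real.exp_pos 1]
  have hsq : Real.exp 1 + ‖x‖ ^ 2 ≤ (jw y + ‖x - y‖) ^ 2 := by
    nlinarith [norm_nonneg x]
  calc jw x = Real.sqrt (Real.exp 1 + ‖x‖ ^ 2) := rfl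
    _ ≤ Real.sqrt ((jw y + ‖x - y‖) ^ 2) := Real.sqrt_le_sqrt hsq
    _ = jw y + ‖x - y‖ := Real.sqrt_sq (by linarith)

lemma add_rpow_le {x y p : ℝ} (hx : 0 ≤ x) (hy : 0 ≤ y) (hp : 0 ≤ p) (hp1 : p ≤ 1) :
    (x + y) ^ p ≤ x ^ p + y ^ p := by
  have h := NNReal.rpow_add_le_add_rpow x.toNNReal y.toNNReal hp hp1
  rw [← NNReal.coe_le_coe] at h
  push_cast at h
  rwa [Real.coe_toNNReal x hx, Real.coe_toNNReal y hy] at h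

lemma rpow_le_one_add {x p : ℝ} (hx : 0 ≤ x) (hp : 0 ≤ p) (hp1 : p ≤ 1) : x ^ p ≤ 1 + x := by
  rcases le_total x 1 with h | h
  · have := Real.rpow_le_one hx h hp; linarith
  · have := Real.rpow_le_rpow_of_exponent_le h hp1
    rw [Real.rpow_one] at this; linarith

lemma one_le_rpow' {x p : ℝ} (hx : 1 ≤ x) (hp : 0 ≤ p) : 1 ≤ x ^ p := by
  calc (1:ℝ) = 1 ^ p := (Real.one_rpow p).symm
    _ ≤ x ^ p := Real.rpow_le_rpow zero_le_one hx hp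

lemma exp_sub_one_le {x y : ℝ} (hx : 0 ≤ x) (hxy : x ≤ y) :
    Real.exp x - 1 ≤ x * Real.exp y := by
  have h1 : 1 - x ≤ Real.exp (-x) := by have := Real.add_one_le_exp (-x); linarith
  have h2 : Real.exp x * (1 - x) ≤ 1 := by
    have h := mul_le_mul_of_nonneg_left h1 (Real.exp_pos x).le
    rwa [← Real.exp_add, add_neg_cancel, Real.exp_zero] at h
  have h3 : Real.exp x ≤ Real.exp y := Real.exp_le_exp.2 hxy
  nlinarith [Real.exp_pos x, (Real.exp_pos x).le]

lemma mul_chain {A g1 g2 b1 b2 : ℝ} (hA : 0 ≤ A) (h1 : g1 ≤ b1) (h2 : g2 ≤ b2)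
    (hg2 : 0 ≤ g2) (hb1 : 0 ≤ b1) : A * g1 * g2 ≤ A * b1 * b2 :=
  mul_le_mul (mul_le_mul_of_nonneg_left h1 hA) h2 hg2 (mul_nonneg hA hb1)

section Stages
variable {E : Type*} [NormedAddCommGroup E] [NormedSpace ℝ E]

lemma stageA {C s t₀ c : ℝ} (hC : 0 < C)
    {φ φ' : ℝ → ℝ} (hφc : ContinuousOn φ (Icc s t₀))
    (hφ' : ∀ τ ∈ Ico s t₀, HasDerivAt φ (φ' τ) τ)
    (hφ'pos : ∀ τ ∈ Ico s t₀, 0 < φ' τ)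
    {u u' : ℝ → E} (hu : ContinuousOn u (Icc s t₀))
    (hu' : ∀ τ ∈ Ico s t₀, HasDerivWithinAt u (u' τ) (Ici τ) τ)
    (hbound : ∀ τ ∈ Ico s t₀, ‖u' τ‖ ≤ 2 * C * φ' τ * (c + 1 + ‖u τ - u s‖)) :
    ∀ τ ∈ Icc s t₀, ‖u τ - u s‖ ≤ (c + 2) * (Real.exp (2*C*(φ τ - φ s)) - 1) := by
  intro τ hτ
  have hBc : ContinuousOn (fun r => (c + 2) * (Real.exp (2*C*(φ r - φ s)) - 1)) (Icc s t₀) := by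
    have h1 : ContinuousOn (fun r => 2*C*(φ r - φ s)) (Icc s t₀) :=
      continuousOn_const.mul (hφc.sub continuousOn_const)
    exact continuousOn_const.mul
      ((Real.continuous_exp.comp_continuousOn h1).sub continuousOn_const)
  have hB' : ∀ x ∈ Ico s t₀,
      HasDerivWithinAt (fun r => (c + 2) * (Real.exp (2*C*(φ r - φ s)) - 1))
        ((c + 2) * (2*C*φ' x * Real.exp (2*C*(φ x - φ s)))) (Ici x) x := by
    intro x hx
    have h1 : HasDerivAt (fun r => 2*C*(φ r - φ s)) (2*C*φ' x) x :=
      ((hφ' x hx).sub_const (φ s)).const_mul (2*C)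
    have h3 := (h1.exp.sub_const 1).const_mul (c+2)
    have h4 : (c+2) * (Real.exp (2*C*(φ x - φ s)) * (2*C*φ' x))
        = (c+2) * (2*C*φ' x * Real.exp (2*C*(φ x - φ s))) := by ring
    exact (h4 ▸ h3).hasDerivWithinAt
  refine image_norm_le_of_norm_deriv_right_lt_deriv_boundary'
    (f := fun r => u r - u s) (f' := u') (hu.sub continuousOn_const)
    (fun x hx => (hu' x hx).sub_const (u s)) (by simp) hBc hB' ?_ hτ
  intro x hx hcontact
  have hb := hbound x hx
  rw [hcontact] at hb
  refine lt_of_le_of_lt hb ?_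
  have hp : 0 < 2 * C * φ' x := by
    have := hφ'pos x hx; positivity
  set Ex := Real.exp (2*C*(φ x - φ s)) with hEx
  have hkey : (c+2) * (2*C*φ' x * Ex)
      - 2 * C * φ' x * (c + 1 + (c + 2) * (Ex - 1)) = 2 * C * φ' x := by ring
  linarith

lemma stageC {s t₀ M : ℝ}
    {φ φ' : ℝ → ℝ} (hφc : ContinuousOn φ (Icc s t₀))
    (hφ' : ∀ τ ∈ Ico s t₀, HasDerivAt φ (φ' τ) τ)
    {u u' : ℝ → E} (hu : ContinuousOn u (Icc s t₀))
    (hu' : ∀ τ ∈ Ico s t₀, HasDerivWithinAt u (u' τ) (Ici τ) τ)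
    (hbound : ∀ τ ∈ Ico s t₀, ‖u' τ‖ ≤ M * φ' τ) :
    ∀ τ ∈ Icc s t₀, ‖u τ - u s‖ ≤ M * (φ τ - φ s) := by
  intro τ hτ
  refine image_norm_le_of_norm_deriv_right_le_deriv_boundary'
    (f := fun r => u r - u s) (f' := u') (hu.sub continuousOn_const)
    (fun x hx => (hu' x hx).sub_const (u s)) (by simp)
    (continuousOn_const.mul (hφc.sub continuousOn_const))
    (fun x hx => (((hφ' x hx).sub_const (φ s)).const_mul M).hasDerivWithinAt)
    hbound hτ

end Stages

lemma stageB {d : ℕ} {K ρ σ : ℝ} (hK : 0 ≤ K) (hσ0 : 0 ≤ σ) (hσ1 : σ ≤ 1)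
    (hρ0 : ρ ≤ 0) (hρσ : 1 + ρ = σ) (hρ1 : -1 ≤ ρ)
    {w v : EuclideanSpace ℝ (Fin d)} (hdev : ‖v - w‖ ≤ K * jw w ^ σ) :
    jw v ^ σ ≤ (1 + K) * jw w ^ σ ∧ jw v ^ ρ ≤ (2 + 2*K) * jw w ^ ρ := by
  have haw : 1 ≤ jw w := one_le_jw w
  have hav : 1 ≤ jw v := one_le_jw v
  have hwpos : 0 < jw w := lt_of_lt_of_le one_pos haw
  have hwσ : jw w ^ σ ≤ jw w := by
    calc jw w ^ σ ≤ jw w ^ (1:ℝ) := Real.rpow_le_rpow_of_exponent_le haw hσ1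
      _ = jw w := Real.rpow_one _
  have hwσpos : 0 < jw w ^ σ := Real.rpow_pos_of_pos hwpos σ
  have hwρpos : 0 < jw w ^ ρ := Real.rpow_pos_of_pos hwpos ρ
  constructor
  · have h1 : jw v ≤ (1+K) * jw w := by
      have h := jw_le_add v w
      nlinarith [hdev]
    calc jw v ^ σ ≤ ((1+K) * jw w) ^ σ :=
          Real.rpow_le_rpow (by linarith) h1 hσ0
      _ = (1+K) ^ σ * jw w ^ σ := Real.mul_rpow (by linarith) hwpos.le
      _ ≤ (1+K) * jw w ^ σ := by
          have h2 : (1+K) ^ σ ≤ 1+K := by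
            calc (1+K) ^ σ ≤ (1+K) ^ (1:ℝ) :=
                  Real.rpow_le_rpow_of_exponent_le (by linarith) hσ1
              _ = 1+K := Real.rpow_one _
          exact mul_le_mul_of_nonneg_right h2 hwσpos.le
  · by_cases hcase : ‖v - w‖ ≤ jw w / 2
    · have hlow : jw w / 2 ≤ jw v := by
        have h := jw_le_add w v
        rw [norm_sub_rev] at h
        linarith
      have h3 : jw v ^ ρ ≤ (jw w / 2) ^ ρ :=
        Real.rpow_le_rpow_of_nonpos (by linarith) hlow hρ0
      have h4 : (jw w / 2) ^ ρ = jw w ^ ρ / (2:ℝ) ^ ρ :=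
        Real.div_rpow hwpos.le (by norm_num : (0:ℝ) ≤ 2) ρ
      have h5 : (1/2:ℝ) ≤ (2:ℝ) ^ ρ := by
        have h := Real.rpow_le_rpow_of_exponent_le one_le_two hρ1
        rw [Real.rpow_neg_one] at h
        norm_num at h ⊢
        linarith
      have h6 : jw w ^ ρ / (2:ℝ) ^ ρ ≤ jw w ^ ρ / (1/2:ℝ) := by
        gcongr
      have h7 : jw w ^ ρ / (1/2:ℝ) = 2 * jw w ^ ρ := by ring
      have h8 : (2 + 2*K) * jw w ^ ρ = 2 * jw w ^ ρ + 2*(K * jw w ^ ρ) := by ring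
      have h9 : 0 ≤ K * jw w ^ ρ := mul_nonneg hK hwρpos.le
      linarith
    · push_neg at hcase
      have h8 : jw w < 2*K*jw w ^ σ := by linarith
      have h9 : jw w ^ σ = jw w * jw w ^ ρ := by
        rw [← hρσ, Real.rpow_add hwpos, Real.rpow_one]
      have h12 : jw w * 1 < jw w * (2*K*jw w ^ ρ) := by
        calc jw w * 1 = jw w := by ring
          _ < 2*K*jw w ^ σ := h8
          _ = jw w * (2*K*jw w ^ ρ) := by rw [h9]; ring
      have h10 : 1 < 2*K*jw w ^ ρ := (mul_lt_mul_iff_right₀ hwpos).mp h12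
      have h13 : jw v ^ ρ ≤ 1 := Real.rpow_le_one_of_one_le_of_nonpos hav hρ0
      have h14 : (2 + 2*K) * jw w ^ ρ = 2 * jw w ^ ρ + (2*K*jw w ^ ρ) := by ring
      have hwρpos' : 0 ≤ jw w ^ ρ := hwρpos.le
      linarith

/-- Estimate (5.3) of Lemma 5.3 of the paper (case `j = k = 0`, `α = β = 0`): in the
pseudodifferential zone, `|p(t) − η| ≤ C''⟨y⟩^{−1/2+ε}⟨η⟩^{1/2+ε}(√Λ(t) − √Λ(s))` and
`|q(t) − y| ≤ C''⟨y⟩^{1/2+ε}⟨η⟩^{−1/2+ε}(√Λ(t) − √Λ(s))`, with `C''` depending only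
on `C` and `ε`. -/
theorem pd_zone_flow_deviation
    (d : ℕ) (C ε : ℝ) (hC : 0 < C) (hε0 : 0 < ε) (hε1 : ε < 1/2) :
    ∃ C'' : ℝ, 0 < C'' ∧ ∀ T : ℝ, 0 < T →
      ∀ lam : ℝ → ℝ, ContinuousOn lam (Set.Icc 0 T) →
        (∀ t ∈ Set.Icc 0 T, 0 ≤ lam t) → (∀ t ∈ Set.Ioc 0 T, 0 < lam t) →
        Real.sqrt (Lam lam T) ≤ 1 →
      ∀ θ : ℝ → EuclideanSpace ℝ (Fin d) → EuclideanSpace ℝ (Fin d) → ℝ,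
        (∀ t ∈ Set.Ioc 0 T, ∀ (x ξ : EuclideanSpace ℝ (Fin d)),
          DifferentiableAt ℝ (fun x' => θ t x' ξ) x) →
        (∀ t ∈ Set.Ioc 0 T, ∀ (x ξ : EuclideanSpace ℝ (Fin d)),
          DifferentiableAt ℝ (fun ξ' => θ t x ξ') ξ) →
        (∀ t ∈ Set.Ioc 0 T, ∀ (x ξ : EuclideanSpace ℝ (Fin d)),
          ‖gradient (fun x' => θ t x' ξ) x‖ ≤
            C * (lam t / Real.sqrt (Lam lam t)) *
              jw x ^ (-(1/2 : ℝ) + ε) * jw ξ ^ ((1/2 : ℝ) + ε)) →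
        (∀ t ∈ Set.Ioc 0 T, ∀ (x ξ : EuclideanSpace ℝ (Fin d)),
          ‖gradient (fun ξ' => θ t x ξ') ξ‖ ≤
            C * (lam t / Real.sqrt (Lam lam t)) *
              jw x ^ ((1/2 : ℝ) + ε) * jw ξ ^ (-(1/2 : ℝ) + ε)) →
      ∀ s t₀ : ℝ, 0 < s → s ≤ t₀ → t₀ ≤ T →
      ∀ q p : ℝ → EuclideanSpace ℝ (Fin d),
        (∀ τ ∈ Set.Icc s t₀, HasDerivWithinAt q
          (gradient (fun ξ' => θ τ (q τ) ξ') (p τ)) (Set.Icc s t₀) τ) →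
        (∀ τ ∈ Set.Icc s t₀, HasDerivWithinAt p
          (-(gradient (fun x' => θ τ x' (p τ)) (q τ))) (Set.Icc s t₀) τ) →
      ∀ t ∈ Set.Icc s t₀,
        ‖p t - p s‖ ≤ C'' * jw (q s) ^ (-(1/2 : ℝ) + ε) * jw (p s) ^ ((1/2 : ℝ) + ε) *
            (Real.sqrt (Lam lam t) - Real.sqrt (Lam lam s)) ∧
        ‖q t - q s‖ ≤ C'' * jw (q s) ^ ((1/2 : ℝ) + ε) * jw (p s) ^ (-(1/2 : ℝ) + ε) *
            (Real.sqrt (Lam lam t) - Real.sqrt (Lam lam s)) := by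
  have hσ0 : (0:ℝ) ≤ (1/2 : ℝ) + ε := by linarith
  have hσ1 : (1/2 : ℝ) + ε ≤ 1 := by linarith
  have hρ0 : -(1/2 : ℝ) + ε ≤ 0 := by linarith
  have hρ1 : (-1:ℝ) ≤ -(1/2 : ℝ) + ε := by linarith
  have hρσ : 1 + (-(1/2 : ℝ) + ε) = (1/2 : ℝ) + ε := by ring
  refine ⟨2*C*(1 + 6*C*Real.exp (2*C))*(2 + 2*(6*C*Real.exp (2*C))), by positivity, ?_⟩
  intro T hT lam hlamc hlam0 hlampos hΛT θ hθx hθξ hgx hgξ s t₀ hs hst₀ ht₀ q p hq hp t ht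
  set K₁ : ℝ := 6*C*Real.exp (2*C) with hK₁def
  have hK₁pos : 0 < K₁ := by rw [hK₁def]; positivity
  set φ : ℝ → ℝ := fun r => Real.sqrt (Lam lam r) with hφdef
  set φ' : ℝ → ℝ := fun r => lam r / (2 * Real.sqrt (Lam lam r)) with hφ'def
  have hsT : s ≤ T := le_trans hst₀ ht₀
  -- basic integrability
  have hint : ∀ τ, 0 ≤ τ → τ ≤ T → IntervalIntegrable lam MeasureTheory.volume 0 τ := by
    intro τ h0 hτT
    apply ContinuousOn.intervalIntegrable
    rw [uIcc_of_le h0]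
    exact hlamc.mono (Icc_subset_Icc le_rfl hτT)
  -- positivity of Λ
  have hΛpos : ∀ τ, 0 < τ → τ ≤ T → 0 < Lam lam τ := by
    intro τ h0 hτT
    exact intervalIntegral.intervalIntegral_pos_of_pos_on (hint τ h0.le hτT)
      (fun x hx => hlampos x ⟨hx.1, hx.2.le.trans hτT⟩) h0
  -- monotonicity of Λ
  have hΛmono : ∀ τ₁ τ₂, 0 ≤ τ₁ → τ₁ ≤ τ₂ → τ₂ ≤ T → Lam lam τ₁ ≤ Lam lam τ₂ := by
    intro τ₁ τ₂ h0 h12 h2T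
    have hi1 : IntervalIntegrable lam MeasureTheory.volume 0 τ₁ := hint τ₁ h0 (le_trans h12 h2T)
    have hi2 : IntervalIntegrable lam MeasureTheory.volume τ₁ τ₂ := by
      apply ContinuousOn.intervalIntegrable
      rw [uIcc_of_le h12]
      exact hlamc.mono (Icc_subset_Icc h0 h2T)
    have hadd := intervalIntegral.integral_add_adjacent_intervals hi1 hi2
    have hnn : 0 ≤ ∫ x in τ₁..τ₂, lam x :=
      intervalIntegral.integral_nonneg h12
        (fun u hu => hlam0 u ⟨le_trans h0 hu.1, le_trans hu.2 h2T⟩)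
    show (∫ r in (0:ℝ)..τ₁, lam r) ≤ ∫ r in (0:ℝ)..τ₂, lam r
    linarith [hadd]
  -- derivative of φ
  have hφ'deriv : ∀ τ ∈ Ico s t₀, HasDerivAt φ (φ' τ) τ := by
    intro τ hτ
    have hτ0 : 0 < τ := lt_of_lt_of_le hs hτ.1
    have hτT : τ < T := lt_of_lt_of_le hτ.2 ht₀
    have hca : ContinuousAt lam τ := hlamc.continuousAt (Icc_mem_nhds hτ0 hτT)
    have hmeas : StronglyMeasurableAtFilter lam (nhds τ) MeasureTheory.volume :=
      ⟨Ioo 0 T, Ioo_mem_nhds hτ0 hτT,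
        (hlamc.mono Ioo_subset_Icc_self).aestronglyMeasurable measurableSet_Ioo⟩
    have hΛd : HasDerivAt (Lam lam) (lam τ) τ :=
      intervalIntegral.integral_hasDerivAt_right (hint τ hτ0.le hτT.le) hmeas hca
    have hΛp : Lam lam τ ≠ 0 := ne_of_gt (hΛpos τ hτ0 hτT.le)
    rw [hφdef, hφ'def]
    exact hΛd.sqrt hΛp
  have hφ'pos : ∀ τ ∈ Ico s t₀, 0 < φ' τ := by
    intro τ hτ
    have hτ0 : 0 < τ := lt_of_lt_of_le hs hτ.1
    have hτT : τ ≤ T := le_trans hτ.2.le ht₀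
    have h1 : 0 < lam τ := hlampos τ ⟨hτ0, hτT⟩
    have h2 : 0 < Real.sqrt (Lam lam τ) := Real.sqrt_pos.2 (hΛpos τ hτ0 hτT)
    rw [hφ'def]
    positivity
  -- continuity of φ
  have hΛcont : ContinuousOn (Lam lam) (Icc 0 T) := by
    have h := intervalIntegral.continuousOn_primitive_interval
      (a := (0:ℝ)) (b := T) (μ := MeasureTheory.volume) (f := lam)
      (by rw [uIcc_of_le hT.le]; exact hlamc.integrableOn_Icc)
    rw [uIcc_of_le hT.le] at h
    exact h
  have hφcont : ContinuousOn φ (Icc s t₀) := by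
    rw [hφdef]
    exact Real.continuous_sqrt.comp_continuousOn
      (hΛcont.mono (Icc_subset_Icc (by linarith) ht₀))
  -- Δ facts
  have hΔ0 : ∀ τ ∈ Icc s t₀, 0 ≤ φ τ - φ s := by
    intro τ hτ
    have := Real.sqrt_le_sqrt (hΛmono s τ hs.le hτ.1 (le_trans hτ.2 ht₀))
    rw [hφdef]
    simpa using this
  have hΔ1 : ∀ τ ∈ Icc s t₀, φ τ - φ s ≤ 1 := by
    intro τ hτ
    have h1 : Real.sqrt (Lam lam τ) ≤ Real.sqrt (Lam lam T) :=
      Real.sqrt_le_sqrt (hΛmono τ T (le_trans hs.le hτ.1) (le_trans hτ.2 ht₀) le_rfl)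
    have h2 : 0 ≤ Real.sqrt (Lam lam s) := Real.sqrt_nonneg _
    rw [hφdef]
    simp only
    linarith
  -- derivatives of q and p within Ici
  have hq' : ∀ τ ∈ Ico s t₀, HasDerivWithinAt q
      (gradient (fun ξ' => θ τ (q τ) ξ') (p τ)) (Ici τ) τ :=
    fun τ hτ => (hq τ (Ico_subset_Icc_self hτ)).mono_of_mem_nhdsWithin
      (Icc_mem_nhdsGE_of_mem hτ)
  have hp' : ∀ τ ∈ Ico s t₀, HasDerivWithinAt p
      (-(gradient (fun x' => θ τ x' (p τ)) (q τ))) (Ici τ) τ :=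
    fun τ hτ => (hp τ (Ico_subset_Icc_self hτ)).mono_of_mem_nhdsWithin
      (Icc_mem_nhdsGE_of_mem hτ)
  have hqc : ContinuousOn q (Icc s t₀) := fun τ hτ => (hq τ hτ).continuousWithinAt
  have hpc : ContinuousOn p (Icc s t₀) := fun τ hτ => (hp τ hτ).continuousWithinAt
  -- rewrite of μ
  have hμeq : ∀ τ ∈ Ico s t₀, lam τ / Real.sqrt (Lam lam τ) = 2 * φ' τ := by
    intro τ hτ
    have hτ0 : 0 < τ := lt_of_lt_of_le hs hτ.1
    have hτT : τ ≤ T := le_trans hτ.2.le ht₀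
    have hS : Real.sqrt (Lam lam τ) ≠ 0 := ne_of_gt (Real.sqrt_pos.2 (hΛpos τ hτ0 hτT))
    rw [hφ'def]
    field_simp
  have hmemT : ∀ τ ∈ Ico s t₀, τ ∈ Ioc 0 T :=
    fun τ hτ => ⟨lt_of_lt_of_le hs hτ.1, le_trans hτ.2.le ht₀⟩
  -- raw derivative bounds
  have hPraw : ∀ τ ∈ Ico s t₀, ‖-(gradient (fun x' => θ τ x' (p τ)) (q τ))‖ ≤
      C * (2 * φ' τ) * jw (q τ) ^ (-(1/2 : ℝ) + ε) * jw (p τ) ^ ((1/2 : ℝ) + ε) := by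
    intro τ hτ
    rw [norm_neg]
    have h := hgx τ (hmemT τ hτ) (q τ) (p τ)
    rwa [hμeq τ hτ] at h
  have hQraw : ∀ τ ∈ Ico s t₀, ‖gradient (fun ξ' => θ τ (q τ) ξ') (p τ)‖ ≤
      C * (2 * φ' τ) * jw (q τ) ^ ((1/2 : ℝ) + ε) * jw (p τ) ^ (-(1/2 : ℝ) + ε) := by
    intro τ hτ
    have h := hgξ τ (hmemT τ hτ) (q τ) (p τ)
    rwa [hμeq τ hτ] at h
  -- weight expansion bound
  have hwexp : ∀ (u : ℝ → EuclideanSpace ℝ (Fin d)) (τ : ℝ),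
      jw (u τ) ^ ((1/2 : ℝ) + ε) ≤ jw (u s) ^ ((1/2 : ℝ) + ε) + 1 + ‖u τ - u s‖ := by
    intro u τ
    have e1 : jw (u τ) ^ ((1/2 : ℝ) + ε) ≤ (jw (u s) + ‖u τ - u s‖) ^ ((1/2 : ℝ) + ε) :=
      Real.rpow_le_rpow (jw_pos _).le (jw_le_add _ _) hσ0
    have e2 : (jw (u s) + ‖u τ - u s‖) ^ ((1/2 : ℝ) + ε) ≤
        jw (u s) ^ ((1/2 : ℝ) + ε) + ‖u τ - u s‖ ^ ((1/2 : ℝ) + ε) :=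
      add_rpow_le (jw_pos _).le (norm_nonneg _) hσ0 hσ1
    have e3 : ‖u τ - u s‖ ^ ((1/2 : ℝ) + ε) ≤ 1 + ‖u τ - u s‖ :=
      rpow_le_one_add (norm_nonneg _) hσ0 hσ1
    linarith
  -- stage A bounds
  have hCφpos : ∀ τ ∈ Ico s t₀, (0:ℝ) ≤ C * (2 * φ' τ) := by
    intro τ hτ
    have := hφ'pos τ hτ
    positivity
  have hboundAp : ∀ τ ∈ Ico s t₀, ‖-(gradient (fun x' => θ τ x' (p τ)) (q τ))‖ ≤
      2 * C * φ' τ * (jw (p s) ^ ((1/2 : ℝ) + ε) + 1 + ‖p τ - p s‖) := by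
    intro τ hτ
    have h1 : jw (q τ) ^ (-(1/2 : ℝ) + ε) ≤ 1 :=
      Real.rpow_le_one_of_one_le_of_nonpos (one_le_jw _) hρ0
    have hchain := mul_chain (hCφpos τ hτ) h1 (hwexp p τ)
      (Real.rpow_nonneg (jw_pos _).le _) zero_le_one
    have heq : C * (2 * φ' τ) * 1 * (jw (p s) ^ ((1/2 : ℝ) + ε) + 1 + ‖p τ - p s‖)
        = 2 * C * φ' τ * (jw (p s) ^ ((1/2 : ℝ) + ε) + 1 + ‖p τ - p s‖) := by ring
    calc ‖-(gradient (fun x' => θ τ x' (p τ)) (q τ))‖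
        ≤ C * (2 * φ' τ) * jw (q τ) ^ (-(1/2 : ℝ) + ε) * jw (p τ) ^ ((1/2 : ℝ) + ε) :=
          hPraw τ hτ
      _ ≤ C * (2 * φ' τ) * 1 * (jw (p s) ^ ((1/2 : ℝ) + ε) + 1 + ‖p τ - p s‖) := hchain
      _ = _ := heq
  have hboundAq : ∀ τ ∈ Ico s t₀, ‖gradient (fun ξ' => θ τ (q τ) ξ') (p τ)‖ ≤
      2 * C * φ' τ * (jw (q s) ^ ((1/2 : ℝ) + ε) + 1 + ‖q τ - q s‖) := by
    intro τ hτ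
    have h2 : jw (p τ) ^ (-(1/2 : ℝ) + ε) ≤ 1 :=
      Real.rpow_le_one_of_one_le_of_nonpos (one_le_jw _) hρ0
    have hb1 : (0:ℝ) ≤ jw (q s) ^ ((1/2 : ℝ) + ε) + 1 + ‖q τ - q s‖ := by
      have := Real.rpow_nonneg (jw_pos (q s)).le ((1/2 : ℝ) + ε)
      have := norm_nonneg (q τ - q s)
      linarith
    have hchain := mul_chain (hCφpos τ hτ) (hwexp q τ) h2
      (Real.rpow_nonneg (jw_pos _).le _) hb1
    have heq : C * (2 * φ' τ) * (jw (q s) ^ ((1/2 : ℝ) + ε) + 1 + ‖q τ - q s‖) * 1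
        = 2 * C * φ' τ * (jw (q s) ^ ((1/2 : ℝ) + ε) + 1 + ‖q τ - q s‖) := by ring
    calc ‖gradient (fun ξ' => θ τ (q τ) ξ') (p τ)‖
        ≤ C * (2 * φ' τ) * jw (q τ) ^ ((1/2 : ℝ) + ε) * jw (p τ) ^ (-(1/2 : ℝ) + ε) :=
          hQraw τ hτ
      _ ≤ C * (2 * φ' τ) * (jw (q s) ^ ((1/2 : ℝ) + ε) + 1 + ‖q τ - q s‖) * 1 := hchain
      _ = _ := heq
  have hAp := stageA hC hφcont hφ'deriv hφ'pos hpc hp' hboundAp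
  have hAq := stageA hC hφcont hφ'deriv hφ'pos hqc hq' hboundAq
  -- refine stage A conclusions
  have refineA : ∀ (c Δ : ℝ), 1 ≤ c → 0 ≤ Δ → Δ ≤ 1 →
      (c + 2) * (Real.exp (2*C*Δ) - 1) ≤ K₁ * c * Δ := by
    intro c Δ hc hΔ0' hΔ1'
    have h1 : Real.exp (2*C*Δ) - 1 ≤ (2*C*Δ) * Real.exp (2*C) :=
      exp_sub_one_le (by positivity) (by nlinarith)
    have h2 : 0 ≤ Real.exp (2*C*Δ) - 1 := by
      have := Real.add_one_le_exp (2*C*Δ)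
      have : (0:ℝ) ≤ 2*C*Δ := by positivity
      nlinarith [Real.add_one_le_exp (2*C*Δ)]
    have h3 : (c+2) * (Real.exp (2*C*Δ) - 1) ≤ (3*c) * ((2*C*Δ) * Real.exp (2*C)) :=
      mul_le_mul (by linarith) h1 h2 (by linarith)
    have h4 : (3*c) * ((2*C*Δ) * Real.exp (2*C)) = K₁ * c * Δ := by rw [hK₁def]; ring
    linarith
  have hgp : ∀ τ ∈ Icc s t₀,
      ‖p τ - p s‖ ≤ K₁ * jw (p s) ^ ((1/2 : ℝ) + ε) * (φ τ - φ s) :=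
    fun τ hτ => le_trans (hAp τ hτ)
      (refineA _ _ (one_le_rpow' (one_le_jw _) hσ0) (hΔ0 τ hτ) (hΔ1 τ hτ))
  have hgq : ∀ τ ∈ Icc s t₀,
      ‖q τ - q s‖ ≤ K₁ * jw (q s) ^ ((1/2 : ℝ) + ε) * (φ τ - φ s) :=
    fun τ hτ => le_trans (hAq τ hτ)
      (refineA _ _ (one_le_rpow' (one_le_jw _) hσ0) (hΔ0 τ hτ) (hΔ1 τ hτ))
  -- stage B: comparability of weights
  have hdev : ∀ (u : ℝ → EuclideanSpace ℝ (Fin d)),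
      (∀ τ ∈ Icc s t₀, ‖u τ - u s‖ ≤ K₁ * jw (u s) ^ ((1/2 : ℝ) + ε) * (φ τ - φ s)) →
      ∀ τ ∈ Icc s t₀, ‖u τ - u s‖ ≤ K₁ * jw (u s) ^ ((1/2 : ℝ) + ε) := by
    intro u hu τ hτ
    have h1 := hu τ hτ
    have h2 := hΔ1 τ hτ
    have h3 := hΔ0 τ hτ
    have hnn : 0 ≤ K₁ * jw (u s) ^ ((1/2 : ℝ) + ε) :=
      mul_nonneg hK₁pos.le (Real.rpow_nonneg (jw_pos _).le _)
    nlinarith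
  have hBp : ∀ τ ∈ Icc s t₀,
      jw (p τ) ^ ((1/2 : ℝ) + ε) ≤ (1 + K₁) * jw (p s) ^ ((1/2 : ℝ) + ε) ∧
      jw (p τ) ^ (-(1/2 : ℝ) + ε) ≤ (2 + 2*K₁) * jw (p s) ^ (-(1/2 : ℝ) + ε) :=
    fun τ hτ => stageB hK₁pos.le hσ0 hσ1 hρ0 hρσ hρ1 (hdev p hgp τ hτ)
  have hBq : ∀ τ ∈ Icc s t₀,
      jw (q τ) ^ ((1/2 : ℝ) + ε) ≤ (1 + K₁) * jw (q s) ^ ((1/2 : ℝ) + ε) ∧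
      jw (q τ) ^ (-(1/2 : ℝ) + ε) ≤ (2 + 2*K₁) * jw (q s) ^ (-(1/2 : ℝ) + ε) :=
    fun τ hτ => stageB hK₁pos.le hσ0 hσ1 hρ0 hρσ hρ1 (hdev q hgq τ hτ)
  -- stage C: final bounds
  have hboundCp : ∀ τ ∈ Ico s t₀, ‖-(gradient (fun x' => θ τ x' (p τ)) (q τ))‖ ≤
      (2*C*(1 + K₁)*(2 + 2*K₁) * jw (q s) ^ (-(1/2 : ℝ) + ε) *
        jw (p s) ^ ((1/2 : ℝ) + ε)) * φ' τ := by
    intro τ hτ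
    have hτ' := Ico_subset_Icc_self hτ
    have hchain := mul_chain (hCφpos τ hτ) (hBq τ hτ').2 (hBp τ hτ').1
      (Real.rpow_nonneg (jw_pos _).le _)
      (mul_nonneg (by linarith) (Real.rpow_nonneg (jw_pos _).le _))
    have heq : C * (2 * φ' τ) * ((2 + 2*K₁) * jw (q s) ^ (-(1/2 : ℝ) + ε)) *
        ((1 + K₁) * jw (p s) ^ ((1/2 : ℝ) + ε))
        = (2*C*(1 + K₁)*(2 + 2*K₁) * jw (q s) ^ (-(1/2 : ℝ) + ε) *
          jw (p s) ^ ((1/2 : ℝ) + ε)) * φ' τ := by ring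
    calc ‖-(gradient (fun x' => θ τ x' (p τ)) (q τ))‖
        ≤ C * (2 * φ' τ) * jw (q τ) ^ (-(1/2 : ℝ) + ε) * jw (p τ) ^ ((1/2 : ℝ) + ε) :=
          hPraw τ hτ
      _ ≤ C * (2 * φ' τ) * ((2 + 2*K₁) * jw (q s) ^ (-(1/2 : ℝ) + ε)) *
          ((1 + K₁) * jw (p s) ^ ((1/2 : ℝ) + ε)) := hchain
      _ = _ := heq
  have hboundCq : ∀ τ ∈ Ico s t₀, ‖gradient (fun ξ' => θ τ (q τ) ξ') (p τ)‖ ≤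
      (2*C*(1 + K₁)*(2 + 2*K₁) * jw (q s) ^ ((1/2 : ℝ) + ε) *
        jw (p s) ^ (-(1/2 : ℝ) + ε)) * φ' τ := by
    intro τ hτ
    have hτ' := Ico_subset_Icc_self hτ
    have hchain := mul_chain (hCφpos τ hτ) (hBq τ hτ').1 (hBp τ hτ').2
      (Real.rpow_nonneg (jw_pos _).le _)
      (mul_nonneg (by linarith) (Real.rpow_nonneg (jw_pos _).le _))
    have heq : C * (2 * φ' τ) * ((1 + K₁) * jw (q s) ^ ((1/2 : ℝ) + ε)) *
        ((2 + 2*K₁) * jw (p s) ^ (-(1/2 : ℝ) + ε))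
        = (2*C*(1 + K₁)*(2 + 2*K₁) * jw (q s) ^ ((1/2 : ℝ) + ε) *
          jw (p s) ^ (-(1/2 : ℝ) + ε)) * φ' τ := by ring
    calc ‖gradient (fun ξ' => θ τ (q τ) ξ') (p τ)‖
        ≤ C * (2 * φ' τ) * jw (q τ) ^ ((1/2 : ℝ) + ε) * jw (p τ) ^ (-(1/2 : ℝ) + ε) :=
          hQraw τ hτ
      _ ≤ C * (2 * φ' τ) * ((1 + K₁) * jw (q s) ^ ((1/2 : ℝ) + ε)) *
          ((2 + 2*K₁) * jw (p s) ^ (-(1/2 : ℝ) + ε)) := hchain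
      _ = _ := heq
  have hCp := stageC hφcont hφ'deriv hpc hp' hboundCp t ht
  have hCq := stageC hφcont hφ'deriv hqc hq' hboundCq t ht
  simp only [hφdef] at hCp hCq
  exact ⟨hCp, hCq⟩
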